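/- Let n be a natural number, set L = ⌊n/25⌋ and M = ⌊(n mod 25)/5⌋, and suppose L ≥ 1. Then, as rational numbers, d_n = (1/24) · (L+1) · (50L² + (85 + 30M)·L + 6M² + 24M + 24) − (2L + (1 + (−1)^L)·(1 + (−1)^{M+1}) + (1 + (−1)^{L+1}))/16. -/

import Mathlib

private def pairs (m : ℕ) : Finset (ℕ × ℕ) :=
  (Finset.range (m+1) ×ˢ Finset.range (m+1)).filter (fun p => 5*p.1 + 10*p.2 ≤ m)

private def trips (n : ℕ) : Finset (ℕ × ℕ × ℕ) :=
  (Finset.range (n+1) ×ˢ Finset.range (n+1) ×ˢ Finset.range (n+1)).filter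
    (fun t => 5*t.1 + 10*t.2.1 + 25*t.2.2 ≤ n)

private def sols (n : ℕ) : Finset (ℕ × ℕ × ℕ × ℕ) :=
  (Finset.range (n+1) ×ˢ Finset.range (n+1) ×ˢ Finset.range (n+1) ×ˢ
      Finset.range (n+1)).filter
    (fun q => q.1 + 5*q.2.1 + 10*q.2.2.1 + 25*q.2.2.2 = n)

private lemma gsum (k : ℕ) :
    ∑ c ∈ Finset.range (k/2 + 1), (k + 1 - 2*c) = (k+2)^2/4 := by
  induction k using Nat.twoStepInduction with
  | zero => decide
  | one => decide
  | more k ih _ =>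
    have h1 : (k+2)/2 + 1 = (k/2 + 1) + 1 := by omega
    rw [h1, Finset.sum_range_succ]
    have h2 : ∀ c ∈ Finset.range (k/2+1), (k+2+1-2*c) = (k+1-2*c) + 2 := by
      intro c hc; simp only [Finset.mem_range] at hc; omega
    rw [Finset.sum_congr rfl h2, Finset.sum_add_distrib, ih, Finset.sum_const,
      Finset.card_range, smul_eq_mul]
    have h3 : (k+2+2)^2 = (k+2)^2 + (k+3)*4 := by ring
    generalize (k+2)^2 = A at *
    generalize (k+2+2)^2 = B at *
    omega

private lemma pairs_card (m : ℕ) : (pairs m).card = (m/5 + 2)^2/4 := by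
  rw [Finset.card_eq_sum_card_fiberwise (f := fun p : ℕ × ℕ => p.2)
    (t := Finset.range (m/10 + 1)) (fun p hp => by
      simp only [pairs, Finset.mem_filter, Finset.mem_product, Finset.mem_range, Finset.mem_coe] at hp ⊢
      omega)]
  have h2 : ∀ c ∈ Finset.range (m/10 + 1),
      ((pairs m).filter (fun p => p.2 = c)).card = m/5 + 1 - 2*c := by
    intro c hc
    simp only [Finset.mem_range] at hc
    rw [show m/5 + 1 - 2*c = (Finset.range (m/5 + 1 - 2*c)).card from
      (Finset.card_range _).symm]
    refine Finset.card_bij' (fun p _ => p.1) (fun b _ => (b, c)) ?_ ?_ ?_ ?_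
    · intro p hp
      simp only [pairs, Finset.mem_filter, Finset.mem_product, Finset.mem_range] at hp ⊢
      omega
    · intro b hb
      simp only [pairs, Finset.mem_filter, Finset.mem_product, Finset.mem_range] at hb ⊢
      exact ⟨⟨⟨by omega, by omega⟩, by omega⟩, trivial⟩
    · intro p hp
      simp only [pairs, Finset.mem_filter, Finset.mem_product, Finset.mem_range] at hp
      exact Prod.ext rfl hp.2.symm
    · intro b hb; rfl
  rw [Finset.sum_congr rfl h2]
  have h4 : m/10 = (m/5)/2 := by omega
  rw [h4, gsum (m/5)]

private lemma trips_card (n : ℕ) :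
    (trips n).card = ∑ e ∈ Finset.range (n/25 + 1), ((n - 25*e)/5 + 2)^2/4 := by
  rw [Finset.card_eq_sum_card_fiberwise (f := fun t : ℕ × ℕ × ℕ => t.2.2)
    (t := Finset.range (n/25 + 1)) (fun t ht => by
      simp only [trips, Finset.mem_filter, Finset.mem_product, Finset.mem_range, Finset.mem_coe] at ht ⊢
      omega)]
  refine Finset.sum_congr rfl fun e he => ?_
  simp only [Finset.mem_range] at he
  rw [← pairs_card (n - 25*e)]
  refine Finset.card_bij' (fun t _ => (t.1, t.2.1)) (fun p _ => (p.1, p.2, e)) ?_ ?_ ?_ ?_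
  · intro t ht
    simp only [trips, pairs, Finset.mem_filter, Finset.mem_product, Finset.mem_range] at ht ⊢
    omega
  · intro p hp
    simp only [trips, pairs, Finset.mem_filter, Finset.mem_product, Finset.mem_range] at hp ⊢
    exact ⟨⟨⟨by omega, by omega, by omega⟩, by omega⟩, trivial⟩
  · intro t ht
    simp only [trips, Finset.mem_filter, Finset.mem_product, Finset.mem_range] at ht
    obtain ⟨b, c, e'⟩ := t
    obtain ⟨-, he'⟩ := ht
    simp only at he' ⊢
    rw [he']
  · intro p hp; rfl

private lemma sols_card (n : ℕ) : (sols n).card = (trips n).card := by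
  refine Finset.card_bij' (fun q _ => q.2)
    (fun t _ => (n - (5*t.1 + 10*t.2.1 + 25*t.2.2), t)) ?_ ?_ ?_ ?_
  · intro q hq
    simp only [sols, trips, Finset.mem_filter, Finset.mem_product, Finset.mem_range] at hq ⊢
    omega
  · intro t ht
    simp only [sols, trips, Finset.mem_filter, Finset.mem_product, Finset.mem_range] at ht ⊢
    omega
  · intro q hq
    simp only [sols, Finset.mem_filter, Finset.mem_product, Finset.mem_range] at hq
    obtain ⟨a, b, c, e⟩ := q
    simp only at hq ⊢
    have : n - (5*b + 10*c + 25*e) = a := by omega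
    rw [this]
  · intro t ht; rfl

private lemma cast_sq_div_even (k : ℕ) (h : k % 2 = 0) :
    ((k^2/4 : ℕ) : ℚ) = (k:ℚ)^2/4 := by
  obtain ⟨t, rfl⟩ : ∃ t, k = 2*t := ⟨k/2, by omega⟩
  have h4 : (2*t)^2 = 4*(t*t) := by ring
  rw [h4, Nat.mul_div_cancel_left _ (by norm_num : 0 < 4)]
  push_cast; ring

private lemma cast_sq_div_odd (k : ℕ) (h : k % 2 = 1) :
    ((k^2/4 : ℕ) : ℚ) = ((k:ℚ)^2 - 1)/4 := by
  obtain ⟨t, rfl⟩ : ∃ t, k = 2*t+1 := ⟨k/2, by omega⟩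
  have h4 : (2*t+1)^2 = 4*(t*t+t) + 1 := by ring
  rw [h4, Nat.mul_add_div (by norm_num : 0 < 4)]
  push_cast; ring

private lemma qsum (M L : ℕ) :
    ((∑ j ∈ Finset.range (L+1), (5*j + M + 2)^2/4 : ℕ) : ℚ)
      = (1 / 24) * ((L : ℚ) + 1) *
          (50 * (L : ℚ) ^ 2 + (85 + 30 * (M : ℚ)) * (L : ℚ)
            + 6 * (M : ℚ) ^ 2 + 24 * (M : ℚ) + 24)
        - (2 * (L : ℚ) + (1 + (-1 : ℚ) ^ L) * (1 + (-1 : ℚ) ^ (M + 1))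
            + (1 + (-1 : ℚ) ^ (L + 1))) / 16 := by
  induction L with
  | zero =>
    rw [Finset.sum_range_one]
    rcases Nat.even_or_odd M with hM | hM
    · rw [cast_sq_div_even _ (by rw [Nat.even_iff] at hM; omega),
        (hM.add_one).neg_one_pow]
      push_cast; norm_num; ring
    · rw [cast_sq_div_odd _ (by rw [Nat.odd_iff] at hM; omega),
        (hM.add_one).neg_one_pow]
      push_cast; norm_num; ring
  | succ L ih =>
    rw [Finset.sum_range_succ, Nat.cast_add, ih]
    rcases Nat.even_or_odd L with hL | hL <;> rcases Nat.even_or_odd M with hM | hM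
    · rw [cast_sq_div_odd _ (by rw [Nat.even_iff] at hL hM; omega),
        hL.neg_one_pow, (hL.add_one).neg_one_pow, ((hL.add_one).add_one).neg_one_pow,
        (hM.add_one).neg_one_pow]
      push_cast; ring
    · rw [cast_sq_div_even _ (by rw [Nat.even_iff] at hL; rw [Nat.odd_iff] at hM; omega),
        hL.neg_one_pow, (hL.add_one).neg_one_pow, ((hL.add_one).add_one).neg_one_pow,
        (hM.add_one).neg_one_pow]
      push_cast; ring
    · rw [cast_sq_div_even _ (by rw [Nat.odd_iff] at hL; rw [Nat.even_iff] at hM; omega),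
        hL.neg_one_pow, (hL.add_one).neg_one_pow, ((hL.add_one).add_one).neg_one_pow,
        (hM.add_one).neg_one_pow]
      push_cast; ring
    · rw [cast_sq_div_odd _ (by rw [Nat.odd_iff] at hL hM; omega),
        hL.neg_one_pow, (hL.add_one).neg_one_pow, ((hL.add_one).add_one).neg_one_pow,
        (hM.add_one).neg_one_pow]
      push_cast; ring

private lemma natcard_eq_sols (n : ℕ) :
    Nat.card {q : ℕ × ℕ × ℕ × ℕ //
        q.1 + 5 * q.2.1 + 10 * q.2.2.1 + 25 * q.2.2.2 = n} = (sols n).card := by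
  have e : {q : ℕ × ℕ × ℕ × ℕ // q.1 + 5 * q.2.1 + 10 * q.2.2.1 + 25 * q.2.2.2 = n}
      ≃ {q : ℕ × ℕ × ℕ × ℕ // q ∈ sols n} :=
    Equiv.subtypeEquivRight (fun q => by
      obtain ⟨a, b, c, e⟩ := q
      simp only [sols, Finset.mem_filter, Finset.mem_product, Finset.mem_range]
      omega)
  rw [Nat.card_congr e, Nat.card_eq_finsetCard]

/-- Exact formula for the number of ways to make change of `n` cents using pennies,
nickels, dimes, and quarters, where `L = ⌊n/25⌋ ≥ 1` and `M = ⌊(n mod 25)/5⌋`. -/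
theorem change_usa_coins_formula (n L M : ℕ) (hL : L = n / 25) (hM : M = (n % 25) / 5)
    (hL1 : 1 ≤ L) :
    (Nat.card {q : ℕ × ℕ × ℕ × ℕ //
        q.1 + 5 * q.2.1 + 10 * q.2.2.1 + 25 * q.2.2.2 = n} : ℚ)
      = (1 / 24) * ((L : ℚ) + 1) *
          (50 * (L : ℚ) ^ 2 + (85 + 30 * (M : ℚ)) * (L : ℚ)
            + 6 * (M : ℚ) ^ 2 + 24 * (M : ℚ) + 24)
        - (2 * (L : ℚ) + (1 + (-1 : ℚ) ^ L) * (1 + (-1 : ℚ) ^ (M + 1))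
            + (1 + (-1 : ℚ) ^ (L + 1))) / 16 := by
  subst hL hM
  have h3 : ∑ e ∈ Finset.range (n/25 + 1), ((n - 25*e)/5 + 2)^2/4
      = ∑ j ∈ Finset.range (n/25 + 1), (5*j + n % 25 / 5 + 2)^2/4 := by
    rw [← Finset.sum_range_reflect (fun j => (5*j + n % 25 / 5 + 2)^2/4) (n/25 + 1)]
    refine Finset.sum_congr rfl fun e he => ?_
    simp only [Finset.mem_range] at he
    have : (n - 25*e)/5 = 5*(n/25 + 1 - 1 - e) + n % 25 / 5 := by omega
    rw [this]
  rw [natcard_eq_sols, sols_card, trips_card, h3]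
  exact qsum _ _
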